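/- Let z be a purely imaginary unit quaternion and let p, q be unit quaternions. Then p z p* = q z q* if and only if there exist real numbers s, t with s² + t² = 1 such that q = p·(s + t·z). (This describes the fibers of the principal S¹-bundle map f : S² × Sp₁ → S² × S², f(z, q) = (z, q z q*).) -/

import Mathlib

open Quaternion

set_option maxHeartbeats 1000000 in
/-- For a purely imaginary unit quaternion `z` and unit quaternions `p`, `q`:
`p z p* = q z q*` iff `q = p (s + t z)` for some reals `s, t` with `s² + t² = 1`.
This describes the fibers of the principal `S¹`-bundle map
`f : S² × Sp₁ → S² × S²`, `f(z, q) = (z, q z q*)`. -/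
theorem fiber_of_conjugation (z p q : ℍ[ℝ])
    (hz_im : z.re = 0) (hz : ‖z‖ = 1) (hp : ‖p‖ = 1) (hq : ‖q‖ = 1) :
    p * z * star p = q * z * star q ↔
      ∃ s t : ℝ, s ^ 2 + t ^ 2 = 1 ∧ q = p * ((s : ℍ[ℝ]) + t • z) := by
  have hzn : normSq z = 1 := by rw [Quaternion.normSq_eq_norm_mul_self, hz]; ring
  have hpn : normSq p = 1 := by rw [Quaternion.normSq_eq_norm_mul_self, hp]; ring
  have hqn : normSq q = 1 := by rw [Quaternion.normSq_eq_norm_mul_self, hq]; ring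
  have hps : star p * p = 1 := by rw [Quaternion.star_mul_self, hpn]; norm_num
  have hps' : p * star p = 1 := by rw [Quaternion.self_mul_star, hpn]; norm_num
  have hqs : star q * q = 1 := by rw [Quaternion.star_mul_self, hqn]; norm_num
  have hzs : star z = -z := by
    ext <;> simp [hz_im]
  have hzz : z * z = -1 := by
    have h1 : star z * z = ((1 : ℝ) : ℍ[ℝ]) := by rw [Quaternion.star_mul_self, hzn]
    rw [hzs, neg_mul] at h1
    have h2 : z * z = -(((1 : ℝ) : ℍ[ℝ])) := by rw [← h1, neg_neg]
    simpa using h2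
  have hz1 : z.imI ^ 2 + z.imJ ^ 2 + z.imK ^ 2 = 1 := by
    have h := hzn
    rw [Quaternion.normSq_def'] at h
    nlinarith [h]
  constructor
  · intro h
    set w : ℍ[ℝ] := star p * q with hw
    have hwn : normSq w = 1 := by
      simp [hw, map_mul, Quaternion.normSq_star, hpn, hqn]
    have hcomm : w * z = z * w := by
      have hqz : q * z = p * z * star p * q := by
        calc q * z = q * z * (star q * q) := by rw [hqs, mul_one]
          _ = (q * z * star q) * q := by rw [← mul_assoc]
          _ = p * z * star p * q := by rw [← h]
      calc w * z = star p * (q * z) := by rw [hw, mul_assoc]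
        _ = star p * (p * z * star p * q) := by rw [hqz]
        _ = (star p * p) * (z * (star p * q)) := by simp only [mul_assoc]
        _ = z * w := by rw [hps, one_mul, hw]
    set a := w.re with ha
    set b := w.imI with hb
    set c := w.imJ with hc
    set d := w.imK with hd
    set t : ℝ := b * z.imI + c * z.imJ + d * z.imK with ht
    have hwn' : a ^ 2 + b ^ 2 + c ^ 2 + d ^ 2 = 1 := by
      have h := hwn
      rw [Quaternion.normSq_def'] at h
      nlinarith [h]
    have e1 : c * z.imK = d * z.imJ := by
      have := congrArg QuaternionAlgebra.imI hcomm
      simp [Quaternion.imI_mul, hz_im, ← ha, ← hb, ← hc, ← hd] at this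
      linarith
    have e2 : d * z.imI = b * z.imK := by
      have := congrArg QuaternionAlgebra.imJ hcomm
      simp [Quaternion.imJ_mul, hz_im, ← ha, ← hb, ← hc, ← hd] at this
      linarith
    have e3 : b * z.imJ = c * z.imI := by
      have := congrArg QuaternionAlgebra.imK hcomm
      simp [Quaternion.imK_mul, hz_im, ← ha, ← hb, ← hc, ← hd] at this
      linarith
    have hb' : b = t * z.imI := by
      rw [ht]; linear_combination (-b) * hz1 + z.imJ * e3 - z.imK * e2
    have hc' : c = t * z.imJ := by
      rw [ht]; linear_combination (-c) * hz1 - z.imI * e3 + z.imK * e1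
    have hd' : d = t * z.imK := by
      rw [ht]; linear_combination (-d) * hz1 + z.imI * e2 - z.imJ * e1
    refine ⟨a, t, ?_, ?_⟩
    · linear_combination hwn' - (b + t * z.imI) * hb' - (c + t * z.imJ) * hc'
        - (d + t * z.imK) * hd' - t ^ 2 * hz1
    · have hwval : w = (a : ℍ[ℝ]) + t • z := by
        ext
        · simp [hz_im, ha]
        · simpa [hz_im] using hb'
        · simpa [hz_im] using hc'
        · simpa [hz_im] using hd'
      rw [← hwval, hw, ← mul_assoc, hps', one_mul]
  · rintro ⟨s, t, hst, rfl⟩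
    have hc : (s : ℍ[ℝ]) * (t • z) = (t • z) * (s : ℍ[ℝ]) := by
      rw [Quaternion.coe_mul_eq_smul, Quaternion.mul_coe_eq_smul]
    have hcz : ((s : ℍ[ℝ]) + t • z) * z = z * ((s : ℍ[ℝ]) + t • z) := by
      ext <;> simp [hz_im] <;> ring
    have hunit : ((s : ℍ[ℝ]) + t • z) * ((s : ℍ[ℝ]) - t • z) = 1 := by
      ext
      · show _ = (1:ℍ[ℝ]).re
        simp [hz_im]
        linear_combination t ^ 2 * hz1 + hst
      · show _ = (1:ℍ[ℝ]).imI
        simp [hz_im]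
        ring
      · show _ = (1:ℍ[ℝ]).imJ
        simp [hz_im]
        ring
      · show _ = (1:ℍ[ℝ]).imK
        simp [hz_im]
        ring
    have hstar : star ((s : ℍ[ℝ]) + t • z) = (s : ℍ[ℝ]) - t • z := by
      rw [star_add, Quaternion.star_smul, hzs, Quaternion.star_coe, smul_neg, ← sub_eq_add_neg]
    rw [star_mul, hstar]
    calc p * z * star p
        = p * (z * 1) * star p := by rw [mul_one]
      _ = p * (z * (((s : ℍ[ℝ]) + t • z) * ((s : ℍ[ℝ]) - t • z))) * star p := by rw [hunit]
      _ = p * ((z * ((s : ℍ[ℝ]) + t • z)) * ((s : ℍ[ℝ]) - t • z)) * star p := by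
            rw [mul_assoc z]
      _ = p * ((((s : ℍ[ℝ]) + t • z) * z) * ((s : ℍ[ℝ]) - t • z)) * star p := by rw [hcz]
      _ = p * ((s : ℍ[ℝ]) + t • z) * z * (((s : ℍ[ℝ]) - t • z) * star p) := by
            simp only [mul_assoc]
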